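/- Let (A, •) be a 2-step nilpotent symmetric Leibniz algebra, and write u•v = [u,v] + {u,v} with [u,v] = (u•v − v•u)/2 and {u,v} = (u•v + v•u)/2. Then ([ , ]) makes A a 2-step nilpotent Lie algebra, ({ , }) makes A a 2-step nilpotent commutative associative algebra, and [u, {v,w}] = {u, [v,w]} = 0 for all u,v,w ∈ A. -/
import Mathlib


/-- Decomposition of a 2-step nilpotent symmetric Leibniz algebra into a 2-step
nilpotent Lie algebra and a 2-step nilpotent commutative associative algebra
satisfying the mixed vanishing identities. -/
theorem twoStepNilpotent_symmetric_decomposition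
    {K A : Type*} [Field K] [AddCommGroup A] [Module K A]
    (htwo : (2 : K) ≠ 0)
    (mul : A →ₗ[K] A →ₗ[K] A)
    (hLL : ∀ u v w : A, mul u (mul v w) = mul (mul u v) w + mul v (mul u w))
    (hRL : ∀ u v w : A, mul u (mul v w) = mul (mul u v) w - mul (mul u w) v)
    (hnil : ∀ u v w : A, mul (mul u v) w = 0 ∧ mul u (mul v w) = 0)
    (br sq : A → A → A)
    (hbr : ∀ u v : A, br u v = (2 : K)⁻¹ • (mul u v - mul v u))
    (hsq : ∀ u v : A, sq u v = (2 : K)⁻¹ • (mul u v + mul v u)) :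
    (∀ u v : A, mul u v = br u v + sq u v) ∧
    (∀ u v : A, br u v = -(br v u)) ∧
    (∀ u v w : A, br (br u v) w = 0) ∧
    (∀ u v w : A, br (br u v) w + br (br v w) u + br (br w u) v = 0) ∧
    (∀ u v : A, sq u v = sq v u) ∧
    (∀ u v w : A, sq (sq u v) w = sq u (sq v w)) ∧
    (∀ u v w : A, sq (sq u v) w = 0) ∧
    (∀ u v w : A, br u (sq v w) = 0 ∧ sq u (br v w) = 0) := by
  have h1 : ∀ u v w : A, mul (mul u v) w = 0 := fun u v w => (hnil u v w).1
  have h2 : ∀ u v w : A, mul u (mul v w) = 0 := fun u v w => (hnil u v w).2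
  refine ⟨?_, ?_, ?_, ?_, ?_, ?_, ?_, ?_⟩
  · intro u v
    rw [hbr, hsq, ← smul_add]
    have : mul u v - mul v u + (mul u v + mul v u) = (2 : K) • mul u v := by module
    rw [this, smul_smul, inv_mul_cancel₀ htwo, one_smul]
  · intro u v
    rw [hbr, hbr]; module
  · intro u v w
    simp [hbr, map_smul, map_sub, h1, h2]
  · intro u v w
    simp [hbr, map_smul, map_sub, h1, h2]
  · intro u v
    rw [hsq, hsq]; module
  · intro u v w
    simp [hsq, map_smul, map_add, h1, h2]
  · intro u v w
    simp [hsq, map_smul, map_add, h1, h2]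
  · intro u v w
    constructor
    · simp [hbr, hsq, map_smul, map_add, map_sub, h1, h2]
    · simp [hbr, hsq, map_smul, map_add, map_sub, h1, h2]
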